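/- Let N_j, N_k, N'_j, N'_k be four independent standard normal random variables, σ_j, σ_k > 0 and c ∈ ℝ. Then E[ P(σ_j(N_j + N'_j) ≤ σ_k(N_k + N'_k) + c | N_j, N_k) ] = Φ(c / √(2(σ_j² + σ_k²))). Consequently this expectation differs from the true limiting pairwise probability Φ(c / √(σ_j² + σ_k²)) whenever c ≠ 0. -/

import Mathlib

open MeasureTheory ProbabilityTheory Real


lemma gauss_conv_pointwise (v w : NNReal) (hv : v ≠ 0) (hw : w ≠ 0) (z x : ℝ) :
    gaussianPDFReal 0 v x * gaussianPDFReal 0 w (z - x) =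
      gaussianPDFReal 0 (v + w) z *
        gaussianPDFReal 0 (v * w / (v + w)) (x - (v : ℝ) * z / ((v : ℝ) + (w : ℝ))) := by
  have hV : (0:ℝ) < v := lt_of_le_of_ne v.2 (by exact_mod_cast Ne.symm hv)
  have hW : (0:ℝ) < w := lt_of_le_of_ne w.2 (by exact_mod_cast Ne.symm hw)
  have hVW : (0:ℝ) < (v:ℝ) + w := by linarith
  have hu : ((v * w / (v + w) : NNReal) : ℝ) = (v:ℝ) * w / ((v:ℝ) + w) := by push_cast; ring
  have hvw : ((v + w : NNReal) : ℝ) = (v:ℝ) + w := by push_cast; ring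
  simp only [gaussianPDFReal, sub_zero, hu, hvw]
  rw [mul_mul_mul_comm, mul_mul_mul_comm ((√(2 * π * ((v:ℝ) + w)))⁻¹)]
  congr 1
  · rw [← mul_inv, ← mul_inv, ← Real.sqrt_mul (by positivity), ← Real.sqrt_mul (by positivity)]
    congr 2
    field_simp
  · rw [← Real.exp_add, ← Real.exp_add]
    congr 1
    field_simp
    ring

lemma gauss_conv_lintegral (v w : NNReal) (hv : v ≠ 0) (hw : w ≠ 0) (z : ℝ) :
    ∫⁻ x, gaussianPDF 0 v x * gaussianPDF 0 w (z - x) = gaussianPDF 0 (v + w) z := by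
  have hu : (v * w / (v + w) : NNReal) ≠ 0 := by
    have : v + w ≠ 0 := by simp [hv, hw]
    positivity
  have h1 : ∀ x, gaussianPDF 0 v x * gaussianPDF 0 w (z - x)
      = gaussianPDF 0 (v+w) z *
        gaussianPDF 0 (v*w/(v+w)) (x - (v:ℝ)*z/((v:ℝ)+(w:ℝ))) := by
    intro x
    simp only [gaussianPDF]
    rw [← ENNReal.ofReal_mul (gaussianPDFReal_pos 0 v x hv).le,
      ← ENNReal.ofReal_mul (gaussianPDFReal_pos 0 (v+w) z (by simp [hv, hw])).le,
      gauss_conv_pointwise v w hv hw]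
  simp_rw [h1]
  rw [lintegral_const_mul' _ _ (by simp [gaussianPDF] : gaussianPDF 0 (v+w) z ≠ ⊤)]
  have : ∫⁻ x, gaussianPDF 0 (v*w/(v+w)) (x - (v:ℝ)*z/((v:ℝ)+(w:ℝ))) =
      ∫⁻ x, gaussianPDF 0 (v*w/(v+w)) x :=
    lintegral_sub_right_eq_self (gaussianPDF 0 (v*w/(v+w))) _
  rw [this, lintegral_gaussianPDF_eq_one 0 hu, mul_one]

lemma gaussianReal_prod_add (v w : NNReal) (hv : v ≠ 0) (hw : w ≠ 0) :
    ((gaussianReal 0 v).prod (gaussianReal 0 w)).map (fun p : ℝ × ℝ => p.1 + p.2)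
      = gaussianReal 0 (v + w) := by
  have hvw : (v + w : NNReal) ≠ 0 := by simp [hv, hw]
  have hmeas : Measurable fun p : ℝ × ℝ => p.1 + p.2 := measurable_fst.add measurable_snd
  refine MeasureTheory.Measure.ext_of_Iic _ _ (fun t => ?_)
  rw [Measure.map_apply hmeas measurableSet_Iic,
    Measure.prod_apply (hmeas measurableSet_Iic)]
  have hpre : ∀ x : ℝ, Prod.mk x ⁻¹' ((fun p : ℝ×ℝ => p.1+p.2) ⁻¹' Set.Iic t)
      = Set.Iic (t - x) := by
    intro x; ext y
    simp only [Set.mem_preimage, Set.mem_Iic]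
    constructor <;> intro h <;> linarith
  simp_rw [hpre]
  have hinner : ∀ x : ℝ, gaussianReal 0 w (Set.Iic (t - x))
      = ∫⁻ y, (Set.Iic t).indicator (fun z => gaussianPDF 0 w (z - x)) y := by
    intro x
    rw [gaussianReal_apply 0 hw, ← lintegral_indicator measurableSet_Iic]
    have := lintegral_add_right_eq_self (μ := volume)
      (fun y => (Set.Iic t).indicator (fun z => gaussianPDF 0 w (z - x)) y) x
    rw [← this]
    congr 1 with y
    by_cases h : y ≤ t - x
    · rw [Set.indicator_of_mem (Set.mem_Iic.2 h),
        Set.indicator_of_mem (Set.mem_Iic.2 (by linarith : y + x ≤ t))]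
      simp
    · rw [Set.indicator_of_notMem (fun hh => h (Set.mem_Iic.1 hh)),
        Set.indicator_of_notMem (fun hh => h (by
          have := Set.mem_Iic.1 hh; linarith))]
  simp_rw [hinner]
  rw [gaussianReal_of_var_ne_zero 0 hv,
    lintegral_withDensity_eq_lintegral_mul _ (measurable_gaussianPDF _ _)
      (by
        apply Measurable.lintegral_prod_right (f := fun x y =>
          (Set.Iic t).indicator (fun z => gaussianPDF 0 w (z - x)) y)
        simp only [Set.indicator_apply]
        exact Measurable.ite (measurable_snd measurableSet_Iic)
          ((measurable_gaussianPDF 0 w).comp (measurable_snd.sub measurable_fst))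
          measurable_const)]
  have hpull : ∀ x : ℝ, gaussianPDF 0 v x *
      ∫⁻ y, (Set.Iic t).indicator (fun z => gaussianPDF 0 w (z - x)) y
      = ∫⁻ y, gaussianPDF 0 v x *
          (Set.Iic t).indicator (fun z => gaussianPDF 0 w (z - x)) y :=
    fun x => (lintegral_const_mul' _ _ (by simp [gaussianPDF])).symm
  simp only [Pi.mul_apply]
  simp_rw [hpull]
  rw [lintegral_lintegral_swap]
  swap
  · apply Measurable.aemeasurable
    apply Measurable.mul ((measurable_gaussianPDF 0 v).comp measurable_fst)
    simp only [Set.indicator_apply]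
    exact Measurable.ite (measurable_snd measurableSet_Iic)
      ((measurable_gaussianPDF 0 w).comp (measurable_snd.sub measurable_fst))
      measurable_const
  have hy : ∀ y : ℝ, (∫⁻ x, gaussianPDF 0 v x *
      (Set.Iic t).indicator (fun z => gaussianPDF 0 w (z - x)) y)
      = (Set.Iic t).indicator (gaussianPDF 0 (v + w)) y := by
    intro y
    by_cases h : y ∈ Set.Iic t
    · simp only [Set.indicator_of_mem h]
      exact gauss_conv_lintegral v w hv hw y
    · simp [Set.indicator_of_notMem h]
  simp_rw [hy]
  rw [lintegral_indicator measurableSet_Iic, ← gaussianReal_apply 0 hvw]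

lemma map_add_gaussian {Ω : Type*} [MeasurableSpace Ω] (μ : Measure Ω) [IsProbabilityMeasure μ]
    {X Y : Ω → ℝ} (hX : Measurable X) (hY : Measurable Y) (h : IndepFun X Y μ)
    {v w : NNReal} (hv : v ≠ 0) (hw : w ≠ 0)
    (hXl : μ.map X = gaussianReal 0 v) (hYl : μ.map Y = gaussianReal 0 w) :
    μ.map (fun ω => X ω + Y ω) = gaussianReal 0 (v + w) := by
  have hpair : μ.map (fun ω => (X ω, Y ω)) = (μ.map X).prod (μ.map Y) :=
    (indepFun_iff_map_prod_eq_prod_map_map hX.aemeasurable hY.aemeasurable).mp h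
  have heq : (fun ω => X ω + Y ω)
      = (fun p : ℝ × ℝ => p.1 + p.2) ∘ (fun ω => (X ω, Y ω)) := rfl
  rw [heq, ← Measure.map_map (g := fun p : ℝ × ℝ => p.1 + p.2) (measurable_fst.add measurable_snd)
    (hX.prodMk hY), hpair,
    hXl, hYl, gaussianReal_prod_add v w hv hw]

lemma map_const_mul_std {Ω : Type*} [MeasurableSpace Ω] (μ : Measure Ω)
    {X : Ω → ℝ} (hX : Measurable X) (hXl : μ.map X = gaussianReal 0 1) (a : ℝ) :
    μ.map (fun ω => a * X ω) = gaussianReal 0 ⟨a ^ 2, sq_nonneg a⟩ := by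
  have heq : (fun ω => a * X ω) = (fun x : ℝ => a * x) ∘ X := rfl
  rw [heq, ← Measure.map_map (measurable_const_mul a) hX, hXl,
    gaussianReal_map_const_mul a]
  norm_num
  rfl


lemma cdf_std_strictMono : StrictMono (cdf (gaussianReal 0 1)) := by
  intro x y hxy
  rw [cdf_eq_real, cdf_eq_real, measureReal_def, measureReal_def]
  have hunion : Set.Iic x ∪ Set.Ioc x y = Set.Iic y := Set.Iic_union_Ioc_eq_Iic hxy.le
  have hdisj : Disjoint (Set.Iic x) (Set.Ioc x y) := by
    rw [Set.disjoint_left]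
    rintro a ha ⟨h1, h2⟩
    exact absurd (Set.mem_Iic.1 ha) (not_le.2 h1)
  have hsum : gaussianReal 0 1 (Set.Iic y)
      = gaussianReal 0 1 (Set.Iic x) + gaussianReal 0 1 (Set.Ioc x y) := by
    rw [← hunion, measure_union hdisj measurableSet_Ioc]
  have hpos : gaussianReal 0 1 (Set.Ioc x y) ≠ 0 := by
    intro h0
    have hvol := (gaussianReal_absolutelyContinuous' 0 one_ne_zero) h0
    rw [Real.volume_Ioc] at hvol
    simp only [ENNReal.ofReal_eq_zero, sub_nonpos] at hvol
    exact absurd hvol (not_le.2 hxy)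
  have hlt : gaussianReal 0 1 (Set.Iic x) < gaussianReal 0 1 (Set.Iic y) := by
    rw [hsum]
    exact ENNReal.lt_add_right (measure_ne_top _ _) hpos
  exact ENNReal.toReal_strict_mono (measure_ne_top _ _) hlt

lemma gaussianReal_Iic_eq (V : ℝ) (hV : 0 < V) (c : ℝ) :
    gaussianReal 0 ⟨V, hV.le⟩ (Set.Iic c)
      = gaussianReal 0 1 (Set.Iic (c / Real.sqrt V)) := by
  have hsV : 0 < Real.sqrt V := Real.sqrt_pos.2 hV
  have hmap : (gaussianReal 0 1).map (fun x => Real.sqrt V * x)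
      = gaussianReal 0 ⟨V, hV.le⟩ := by
    rw [gaussianReal_map_const_mul (Real.sqrt V)]
    congr 1
    · ring
    · apply NNReal.coe_injective
      simp [Real.sq_sqrt hV.le]
      rfl
  rw [← hmap, Measure.map_apply (measurable_const_mul _) measurableSet_Iic]
  congr 1
  ext z
  simp only [Set.mem_preimage, Set.mem_Iic]
  rw [mul_comm, ← le_div_iff₀ hsV]

theorem bootstrap_doubled_variance_inconsistency
    {Ω : Type*} [MeasurableSpace Ω] (μ : Measure Ω) [IsProbabilityMeasure μ]
    (Nj Nk Nj' Nk' : Ω → ℝ)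
    (hNj : Measurable Nj) (hNk : Measurable Nk)
    (hNj' : Measurable Nj') (hNk' : Measurable Nk')
    (hindep : iIndepFun ![Nj, Nk, Nj', Nk'] μ)
    (hlaw : ∀ i : Fin 4, μ.map (![Nj, Nk, Nj', Nk'] i) = gaussianReal 0 1)
    (σj σk : ℝ) (hσj : 0 < σj) (hσk : 0 < σk) (c : ℝ) :
    (∫ ω, (μ[Set.indicator {ω' | σj * (Nj ω' + Nj' ω') ≤ σk * (Nk ω' + Nk' ω') + c}
          (fun _ => (1 : ℝ)) |
        MeasurableSpace.comap (fun ω' => (Nj ω', Nk ω')) inferInstance]) ω ∂μ) =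
      cdf (gaussianReal 0 1) (c / Real.sqrt (2 * (σj ^ 2 + σk ^ 2))) ∧
    (c ≠ 0 →
      cdf (gaussianReal 0 1) (c / Real.sqrt (2 * (σj ^ 2 + σk ^ 2))) ≠
        cdf (gaussianReal 0 1) (c / Real.sqrt (σj ^ 2 + σk ^ 2))) := by
  have hmeasv : ∀ i, Measurable (![Nj, Nk, Nj', Nk'] i) := by
    intro i; fin_cases i <;> assumption
  -- laws of the four coordinates
  have hlNj : μ.map Nj = gaussianReal 0 1 := hlaw 0
  have hlNk : μ.map Nk = gaussianReal 0 1 := hlaw 1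
  have hlNj' : μ.map Nj' = gaussianReal 0 1 := hlaw 2
  have hlNk' : μ.map Nk' = gaussianReal 0 1 := hlaw 3
  -- variances
  have hvj : (⟨σj ^ 2, sq_nonneg σj⟩ : NNReal) ≠ 0 := by
    change NNReal.mk (σj ^ 2) (sq_nonneg σj) ≠ (0 : NNReal)
    rw [← NNReal.coe_ne_zero]; exact ne_of_gt (by positivity : (0:ℝ) < σj ^ 2)
  have hvk : (⟨σk ^ 2, sq_nonneg σk⟩ : NNReal) ≠ 0 := by
    change NNReal.mk (σk ^ 2) (sq_nonneg σk) ≠ (0 : NNReal)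
    rw [← NNReal.coe_ne_zero]; exact ne_of_gt (by positivity : (0:ℝ) < σk ^ 2)
  have hneg : (⟨(-σk) ^ 2, sq_nonneg (-σk)⟩ : NNReal) = ⟨σk ^ 2, sq_nonneg σk⟩ := by
    apply NNReal.coe_injective; simp [neg_sq]
  set vj : NNReal := ⟨σj ^ 2, sq_nonneg σj⟩ with hvjdef
  set vk : NNReal := ⟨σk ^ 2, sq_nonneg σk⟩ with hvkdef
  -- S1 and S2
  set S1 : Ω → ℝ := fun ω => σj * Nj ω + (-σk) * Nk ω with hS1def
  set S2 : Ω → ℝ := fun ω => σj * Nj' ω + (-σk) * Nk' ω with hS2def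
  have hS1meas : Measurable S1 := (hNj.const_mul σj).add (hNk.const_mul (-σk))
  have hS2meas : Measurable S2 := (hNj'.const_mul σj).add (hNk'.const_mul (-σk))
  have hindep01 : IndepFun Nj Nk μ := hindep.indepFun (i := 0) (j := 1) (by decide)
  have hindep23 : IndepFun Nj' Nk' μ := hindep.indepFun (i := 2) (j := 3) (by decide)
  have hS1law : μ.map S1 = gaussianReal 0 (vj + vk) := by
    have := map_add_gaussian μ (hNj.const_mul σj) (hNk.const_mul (-σk))
      (hindep01.comp (measurable_const_mul σj) (measurable_const_mul (-σk)))
      hvj hvk (map_const_mul_std μ hNj hlNj σj)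
      (by rw [map_const_mul_std μ hNk hlNk (-σk), hneg])
    exact this
  have hS2law : μ.map S2 = gaussianReal 0 (vj + vk) := by
    have := map_add_gaussian μ (hNj'.const_mul σj) (hNk'.const_mul (-σk))
      (hindep23.comp (measurable_const_mul σj) (measurable_const_mul (-σk)))
      hvj hvk (map_const_mul_std μ hNj' hlNj' σj)
      (by rw [map_const_mul_std μ hNk' hlNk' (-σk), hneg])
    exact this
  have hindepS : IndepFun S1 S2 μ := by
    have hpair := hindep.indepFun_prodMk_prodMk hmeasv 0 1 2 3
      (by decide) (by decide) (by decide) (by decide)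
    have hg : Measurable fun p : ℝ × ℝ => σj * p.1 + (-σk) * p.2 :=
      (measurable_fst.const_mul σj).add (measurable_snd.const_mul (-σk))
    exact hpair.comp hg hg
  have hvjk : vj + vk ≠ 0 := by intro h0; exact hvj (add_eq_zero.mp h0).1
  set X : Ω → ℝ := fun ω => S1 ω + S2 ω with hXdef
  have hXmeas : Measurable X := hS1meas.add hS2meas
  have hXlaw : μ.map X = gaussianReal 0 ((vj + vk) + (vj + vk)) :=
    map_add_gaussian μ hS1meas hS2meas hindepS hvjk hvjk hS1law hS2law
  -- variance identification
  have hVpos : (0:ℝ) < 2 * (σj ^ 2 + σk ^ 2) := by positivity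
  have hVnn : ((vj + vk) + (vj + vk)) = (⟨2 * (σj ^ 2 + σk ^ 2), hVpos.le⟩ : NNReal) := by
    apply NNReal.coe_injective; rw [NNReal.coe_add, NNReal.coe_add]
    change σj ^ 2 + σk ^ 2 + (σj ^ 2 + σk ^ 2) = 2 * (σj ^ 2 + σk ^ 2); ring
  -- the event
  set A : Set Ω := {ω' | σj * (Nj ω' + Nj' ω') ≤ σk * (Nk ω' + Nk' ω') + c} with hAdef
  have hAeq : A = X ⁻¹' (Set.Iic c) := by
    ext ω
    simp only [hAdef, Set.mem_setOf_eq, Set.mem_preimage, Set.mem_Iic, hXdef, hS1def, hS2def]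
    constructor <;> intro h <;> nlinarith
  have hAmeas : MeasurableSet A := by
    rw [hAeq]; exact hXmeas measurableSet_Iic
  have hμA : μ A = gaussianReal 0 1 (Set.Iic (c / Real.sqrt (2 * (σj ^ 2 + σk ^ 2)))) := by
    rw [hAeq, ← Measure.map_apply hXmeas measurableSet_Iic, hXlaw, hVnn,
      gaussianReal_Iic_eq _ hVpos]
  constructor
  · rw [integral_condExp_indicator (hNj.prodMk hNk) hAmeas, measureReal_def, hμA, cdf_eq_real,
      measureReal_def]
  · intro hc h
    have hs : (0:ℝ) < σj ^ 2 + σk ^ 2 := by positivity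
    have hne : c / Real.sqrt (2 * (σj ^ 2 + σk ^ 2)) ≠ c / Real.sqrt (σj ^ 2 + σk ^ 2) := by
      intro heq
      have h2 : Real.sqrt (2 * (σj ^ 2 + σk ^ 2)) ≠ Real.sqrt (σj ^ 2 + σk ^ 2) := by
        intro hsq
        have := (Real.sqrt_inj (by positivity) hs.le).mp hsq
        linarith
      have hs1 : Real.sqrt (2 * (σj ^ 2 + σk ^ 2)) ≠ 0 := by positivity
      have hs2 : Real.sqrt (σj ^ 2 + σk ^ 2) ≠ 0 := by positivity
      rw [div_eq_div_iff (by positivity) (by positivity)] at heq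
      exact h2 ((mul_left_cancel₀ hc heq).symm)
    exact hne (cdf_std_strictMono.injective h)
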